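/- Suppose T is a Hurwitz tree of type (G, 2) with G = Q_{2^{n+1}} (n ≥ 2), δ_T = 0, and Artin character a_T satisfying ⟨a_T, χ₀⟩ = 2 and ⟨a_T, χ₁⟩ = ⟨a_T, χ₂⟩ ≥ 2, where χ_i is the order-2 character of G with kernel containing H_i. Then with B_i = { leaves b : [G_b] = [H_i] } one has |B₁| = |B₂| = 1 and |B₀| ≥ 1. -/

import Mathlib

open Finset

/-- A rooted metric tree: a finite set of vertices with a parent function, a root, a
unique trunk edge at the root, and a nonnegative rational thickness attached to each
edge (recorded at its target vertex), which vanishes exactly at the leaves. -/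
structure MetricRootedTree where
  V : Type
  [fin : Fintype V]
  [deq : DecidableEq V]
  root : V
  parent : V → V
  parent_root : parent root = root
  reaches_root : ∀ v, ∃ n : ℕ, parent^[n] v = root
  trunk : V
  trunk_ne : trunk ≠ root
  trunk_parent : parent trunk = root
  trunk_unique : ∀ w, w ≠ root → parent w = root → w = trunk
  eps : V → ℚ
  eps_nonneg : ∀ v, 0 ≤ eps v
  eps_zero_iff : ∀ v, v ≠ root → (eps v = 0 ↔ ∀ w, parent w = v → w = v)

attribute [instance] MetricRootedTree.fin MetricRootedTree.deq

namespace MetricRootedTree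

variable (T : MetricRootedTree)

/-- `v ≤ w` : there is an oriented path from `v` down to `w`. -/
def le (v w : T.V) : Prop := ∃ n : ℕ, T.parent^[n] w = v

/-- A leaf is a maximal vertex (no children) other than the root. -/
def IsLeaf (v : T.V) : Prop := v ≠ T.root ∧ ∀ w, T.parent w = v → w = v

open Classical in
/-- The set `B` of leaves. -/
noncomputable def leaves : Finset T.V := Finset.univ.filter T.IsLeaf

open Classical in
/-- Inverse distance between two leaves: the sum of the thicknesses of the edges on the
common initial segment of the paths from the root to `b₁` and to `b₂`. -/
noncomputable def idist (b₁ b₂ : T.V) : ℚ :=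
  ∑ v ∈ Finset.univ.filter (fun v => T.le v b₁ ∧ T.le v b₂ ∧ v ≠ T.root), T.eps v

/-- The density of a set of leaves `A` at `b ∈ A`: `d(A,b) = Σ_{b' ∈ A, b' ≠ b} d(b,b')`. -/
noncomputable def density (A : Finset T.V) (b : T.V) : ℚ :=
  ∑ b' ∈ A.erase b, T.idist b b'

open Classical in
/-- `n(A,v) = |{b' ∈ A : b' ≠ b, v ≤ b'}|`. -/
noncomputable def nCount (A : Finset T.V) (b v : T.V) : ℕ :=
  ((A.erase b).filter (fun b' => T.le v b')).card

lemma root_fixed (k : ℕ) : T.parent^[k] T.root = T.root := by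
  induction k with
  | zero => rfl
  | succ k ih => rw [Function.iterate_succ_apply', ih, T.parent_root]

lemma eq_root_of_cycle (v : T.V) (k : ℕ) (hk : T.parent^[k+1] v = v) : v = T.root := by
  obtain ⟨N, hN⟩ := T.reaches_root v
  have per : ∀ j : ℕ, T.parent^[(k+1)*j] v = v := by
    intro j
    induction j with
    | zero => rfl
    | succ j ih =>
        rw [Nat.mul_succ, Function.iterate_add_apply, hk, ih]
  have h1 : T.parent^[(k+1)*N] v = T.root := by
    have : (k+1)*N = k*N + N := by ring
    rw [this, Function.iterate_add_apply, hN, root_fixed]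
  rw [per N] at h1; exact h1

lemma le_of_child_le {v w x : T.V} (hp : T.parent w = v) (h : T.le w x) : T.le v x := by
  obtain ⟨k, hk⟩ := h
  exact ⟨k+1, by rw [Function.iterate_succ_apply', hk, hp]⟩

lemma not_le_parent {v w : T.V} (hp : T.parent w = v) (hv : v ≠ T.root) : ¬ T.le w v := by
  rintro ⟨k, hk⟩
  exact hv (T.eq_root_of_cycle v k (by rw [Function.iterate_succ_apply', hk, hp]))

lemma leaf_le_eq {v : T.V} (hv : T.IsLeaf v) {b : T.V} (h : T.le v b) : b = v := by
  obtain ⟨k, hk⟩ := h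
  induction k generalizing b with
  | zero => exact hk
  | succ k ih =>
      rw [Function.iterate_succ_apply'] at hk
      exact ih (hv.2 _ hk)

lemma exists_child_of_le {v b : T.V} (h : T.le v b) (hne : b ≠ v) :
    ∃ w, T.parent w = v ∧ w ≠ v ∧ T.le w b := by
  obtain ⟨k, hk⟩ := h
  induction k generalizing b with
  | zero => exact absurd hk hne
  | succ k ih =>
      rw [Function.iterate_succ_apply'] at hk
      by_cases hu : T.parent^[k] b = v
      · exact ih hne hu
      · exact ⟨T.parent^[k] b, hk, hu, ⟨k, rfl⟩⟩

lemma child_eq_of_le_le {v w₁ w₂ b : T.V} (hv : v ≠ T.root)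
    (hp₁ : T.parent w₁ = v) (h₁ : w₁ ≠ v) (hp₂ : T.parent w₂ = v) (h₂ : w₂ ≠ v)
    (hl₁ : T.le w₁ b) (hl₂ : T.le w₂ b) : w₁ = w₂ := by
  obtain ⟨i, hi⟩ := hl₁
  obtain ⟨j, hj⟩ := hl₂
  have key : ∀ (i j : ℕ) (w₁ w₂ : T.V), T.parent w₁ = v → w₁ ≠ v → T.parent w₂ = v → w₂ ≠ v →
      T.parent^[i] b = w₁ → T.parent^[j] b = w₂ → i ≤ j → w₁ = w₂ := by
    intro i j w₁ w₂ hp₁ h₁ hp₂ h₂ hi hj hij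
    have hd : T.parent^[j-i] w₁ = w₂ := by
      rw [← hi, ← Function.iterate_add_apply, Nat.sub_add_cancel hij, hj]
    rcases Nat.eq_zero_or_pos (j - i) with h0 | h0
    · rw [h0] at hd; exact hd
    · obtain ⟨d, hde⟩ := Nat.exists_eq_succ_of_ne_zero h0.ne'
      rw [hde, Function.iterate_succ_apply, hp₁] at hd
      rcases Nat.eq_zero_or_pos d with h0' | h0'
      · rw [h0'] at hd; exact absurd hd.symm h₂
      · obtain ⟨e, he⟩ := Nat.exists_eq_succ_of_ne_zero h0'.ne'
        subst he
        exfalso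
        apply hv
        apply T.eq_root_of_cycle v (e+1)
        rw [Function.iterate_succ_apply', hd, hp₂]
  rcases le_total i j with hij | hij
  · exact key i j w₁ w₂ hp₁ h₁ hp₂ h₂ hi hj hij
  · exact (key j i w₂ w₁ hp₂ h₂ hp₁ h₁ hj hi hij).symm

lemma le_trunk_of_leaf {b : T.V} (hb : b ≠ T.root) : T.le T.trunk b := by
  obtain ⟨N, hN⟩ := T.reaches_root b
  induction N generalizing b with
  | zero => exact absurd hN hb
  | succ N ih =>
      rw [Function.iterate_succ_apply'] at hN
      by_cases hu : T.parent^[N] b = T.root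
      · exact ih hb hu
      · have := T.trunk_unique _ hu hN
        exact ⟨N, this ▸ rfl⟩


end MetricRootedTree

section Characters

open Classical

variable {G : Type} [Group G] [Fintype G]

/-- Inner product of class functions on a finite group. -/
noncomputable def innerCF (χ₁ χ₂ : G → ℂ) : ℂ :=
  (Fintype.card G : ℂ)⁻¹ * ∑ g : G, (starRingEnd ℂ) (χ₁ g) * χ₂ g

/-- Induction of a class function supported on a subgroup `H ≤ G` to `G`. -/
noncomputable def indCF (H : Subgroup G) (f : G → ℂ) : G → ℂ :=
  fun g => (Nat.card H : ℂ)⁻¹ * ∑ x : G, f (x⁻¹ * g * x)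

open Classical in
/-- The augmentation character `u_H = r_H - 1_H` of `H`, extended by zero to `G`. -/
noncomputable def augChar (H : Subgroup G) : G → ℂ :=
  fun h => if h ∈ H then (if h = 1 then (Nat.card H : ℂ) - 1 else -1) else 0

/-- The induced augmentation character `(u_H)^* = Ind_H^G (r_H - 1_H)`. -/
noncomputable def indAug (H : Subgroup G) : G → ℂ := indCF H (augChar H)

open Classical in
/-- The class function `δ_H^mult` of a cyclic `p`-subgroup `H ≤ G` of order `p^m`
(extended by zero to `G`): `δ(σ^a) = -p^(i+1)/(p-1)` for `σ^a ≠ 1` with `i = ord_p a`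
(so that `σ^a` has order `p^(m-i)`), and `δ(1) = m·p^m`. -/
noncomputable def deltaMultSub (p : ℕ) (H : Subgroup G) : G → ℂ :=
  fun h =>
    if h ∈ H then
      (if h = 1 then ((Nat.card H).factorization p : ℂ) * (Nat.card H : ℂ)
       else -((p : ℂ) ^ ((Nat.card H).factorization p - (orderOf h).factorization p + 1))
              / ((p : ℂ) - 1))
    else 0

end Characters

open Classical in
/-- The set of children (successors) of a vertex. -/
noncomputable def MetricRootedTree.children (T : MetricRootedTree) (v : T.V) : Finset T.V :=
  Finset.univ.filter (fun w => T.parent w = v ∧ w ≠ v)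

/-- A Hurwitz tree of type `(G,p)`: a rooted metric tree with monodromy groups `G_v`,
Artin characters `a_e` (attached to the target vertex of each edge) and depth characters
`δ_v`, subject to axioms (H1)–(H5) of Brewis–Wewers. -/
structure HurwitzTree (G : Type) [Group G] [Fintype G] (p : ℕ) extends MetricRootedTree where
  Gv : V → Subgroup G
  av : V → G → ℂ
  dv : V → G → ℂ
  -- (H1): monodromy groups decrease (up to conjugacy) along edges …
  h1_sub : ∀ v w, parent w = v → w ≠ v → ∃ g : G, ∀ x ∈ Gv w, g * x * g⁻¹ ∈ Gv v
  -- … with branching `Σ_{v → v'} [G_v : G_{v'}] > 1` at interior non-root vertices …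
  h1_branch : ∀ v, v ≠ root → ¬ toMetricRootedTree.IsLeaf v →
    1 < ∑ w ∈ toMetricRootedTree.children v, Nat.card (Gv v) / Nat.card (Gv w)
  -- … and monodromy group `G` at the root and at the target of the trunk.
  h1_root : Gv root = ⊤
  h1_trunk : Gv trunk = ⊤
  -- (H2): the monodromy group at each leaf is nontrivial and cyclic.
  h2 : ∀ b, toMetricRootedTree.IsLeaf b → Gv b ≠ ⊥ ∧ IsCyclic (Gv b)
  -- (H3): the Artin characters.
  h3_leaf : ∀ b, toMetricRootedTree.IsLeaf b → av b = indAug (Gv b)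
  h3_inner : ∀ v, v ≠ root → ¬ toMetricRootedTree.IsLeaf v →
    av v = fun g => ∑ w ∈ toMetricRootedTree.children v, av w g
  -- (H4): the depth characters, `δ_{t(e)} = δ_{s(e)} + ε_e·(a_e - (u_{G_{t(e)}})^*)`.
  h4 : ∀ v, v ≠ root →
    dv v = fun g => dv (parent v) g + (eps v : ℂ) * (av v g - indAug (Gv v) g)
  -- (H5): at each leaf, `δ_b` is induced from `δ^mult` of the Sylow `p`-subgroup of `G_b`.
  h5 : ∀ b, toMetricRootedTree.IsLeaf b → ∀ P : Subgroup G, P ≤ Gv b → IsPGroup p P →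
    (∀ Q : Subgroup G, Q ≤ Gv b → IsPGroup p Q → Q ≤ P) →
    dv b = indCF P (deltaMultSub p P)

namespace HurwitzTree

variable {G : Type} [Group G] [Fintype G] {p : ℕ} (T : HurwitzTree G p)

/-- The depth `δ_T` of a Hurwitz tree. -/
noncomputable def depth : G → ℂ := T.dv T.root

/-- The Artin character `a_T` of a Hurwitz tree (the Artin character of the trunk). -/
noncomputable def artin : G → ℂ := T.av T.trunk

end HurwitzTree

section TreeDecomp

open Classical

variable {G : Type} [Group G] [Fintype G] {p : ℕ} (T : HurwitzTree G p)

lemma HurwitzTree.av_sum_leaves :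
    ∀ (N : ℕ) (v : T.toMetricRootedTree.V),
      (Finset.univ.filter (fun x => T.toMetricRootedTree.le v x)).card ≤ N →
      v ≠ T.toMetricRootedTree.root →
      T.av v = fun g => ∑ b ∈ T.toMetricRootedTree.leaves.filter
        (fun b => T.toMetricRootedTree.le v b), T.av b g := by
  intro N
  induction N with
  | zero =>
      intro v hcard _
      exfalso
      have hv : v ∈ Finset.univ.filter (fun x => T.toMetricRootedTree.le v x) :=
        Finset.mem_filter.mpr ⟨Finset.mem_univ _, ⟨0, rfl⟩⟩
      have := Finset.card_pos.mpr ⟨v, hv⟩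
      omega
  | succ N ih =>
      intro v hcard hv
      by_cases hleaf : T.toMetricRootedTree.IsLeaf v
      · have hset : T.toMetricRootedTree.leaves.filter
            (fun b => T.toMetricRootedTree.le v b) = {v} := by
          apply Finset.eq_singleton_iff_unique_mem.mpr
          constructor
          · exact Finset.mem_filter.mpr ⟨Finset.mem_filter.mpr ⟨Finset.mem_univ _, hleaf⟩,
              ⟨0, rfl⟩⟩
          · intro b hb
            exact T.toMetricRootedTree.leaf_le_eq hleaf (Finset.mem_filter.mp hb).2
        rw [hset]
        funext g
        simp
      · rw [T.h3_inner v hv hleaf]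
        have hchild : ∀ w ∈ T.toMetricRootedTree.children v,
            T.toMetricRootedTree.parent w = v ∧ w ≠ v := by
          intro w hw
          exact (Finset.mem_filter.mp hw).2
        have hsub : ∀ w ∈ T.toMetricRootedTree.children v,
            (Finset.univ.filter (fun x => T.toMetricRootedTree.le w x)).card ≤ N := by
          intro w hw
          obtain ⟨hp, hne⟩ := hchild w hw
          have hss : Finset.univ.filter (fun x => T.toMetricRootedTree.le w x) ⊂
              Finset.univ.filter (fun x => T.toMetricRootedTree.le v x) := by
            constructor
            · intro x hx
              exact Finset.mem_filter.mpr ⟨Finset.mem_univ _,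
                T.toMetricRootedTree.le_of_child_le hp (Finset.mem_filter.mp hx).2⟩
            · intro hcon
              have hvx : v ∈ Finset.univ.filter (fun x => T.toMetricRootedTree.le v x) :=
                Finset.mem_filter.mpr ⟨Finset.mem_univ _, ⟨0, rfl⟩⟩
              have := (Finset.mem_filter.mp (hcon hvx)).2
              exact T.toMetricRootedTree.not_le_parent hp hv this
          have := Finset.card_lt_card hss
          omega
        have hwroot : ∀ w ∈ T.toMetricRootedTree.children v,
            w ≠ T.toMetricRootedTree.root := by
          intro w hw hwr
          obtain ⟨hp, _⟩ := hchild w hw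
          rw [hwr, T.toMetricRootedTree.parent_root] at hp
          exact hv hp.symm
        have hbi : T.toMetricRootedTree.leaves.filter
            (fun b => T.toMetricRootedTree.le v b) =
            (T.toMetricRootedTree.children v).biUnion
              (fun w => T.toMetricRootedTree.leaves.filter
                (fun b => T.toMetricRootedTree.le w b)) := by
          apply Finset.ext
          intro b
          simp only [Finset.mem_biUnion, Finset.mem_filter]
          constructor
          · rintro ⟨hbl, hle⟩
            have hbv : b ≠ v := by
              intro h
              subst h
              exact hleaf (Finset.mem_filter.mp hbl).2
            obtain ⟨w, hp, hne, hlw⟩ := T.toMetricRootedTree.exists_child_of_le hle hbv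
            exact ⟨w, Finset.mem_filter.mpr ⟨Finset.mem_univ _, hp, hne⟩, hbl, hlw⟩
          · rintro ⟨w, hw, hbl, hlw⟩
            obtain ⟨hp, _⟩ := hchild w hw
            exact ⟨hbl, T.toMetricRootedTree.le_of_child_le hp hlw⟩
        have hdisj : (↑(T.toMetricRootedTree.children v) : Set T.toMetricRootedTree.V).PairwiseDisjoint
            (fun w => T.toMetricRootedTree.leaves.filter
              (fun b => T.toMetricRootedTree.le w b)) := by
          intro w₁ hw₁ w₂ hw₂ hne
          apply Finset.disjoint_left.mpr
          intro b hb₁ hb₂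
          obtain ⟨hp₁, hne₁⟩ := hchild w₁ hw₁
          obtain ⟨hp₂, hne₂⟩ := hchild w₂ hw₂
          exact hne (T.toMetricRootedTree.child_eq_of_le_le hv hp₁ hne₁ hp₂ hne₂
            (Finset.mem_filter.mp hb₁).2 (Finset.mem_filter.mp hb₂).2)
        funext g
        rw [hbi, Finset.sum_biUnion hdisj]
        apply Finset.sum_congr rfl
        intro w hw
        rw [ih w (hsub w hw) (hwroot w hw)]

lemma HurwitzTree.artin_eq_sum :
    T.artin = fun g => ∑ b ∈ T.toMetricRootedTree.leaves, indAug (T.Gv b) g := by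
  have h := T.av_sum_leaves _ T.toMetricRootedTree.trunk le_rfl T.toMetricRootedTree.trunk_ne
  have hset : T.toMetricRootedTree.leaves.filter
      (fun b => T.toMetricRootedTree.le T.toMetricRootedTree.trunk b) =
      T.toMetricRootedTree.leaves := by
    apply Finset.filter_true_of_mem
    intro b hb
    exact T.toMetricRootedTree.le_trunk_of_leaf
      ((Finset.mem_filter.mp hb).2).1
  rw [HurwitzTree.artin, h, hset]
  funext g
  apply Finset.sum_congr rfl
  intro b hb
  rw [T.h3_leaf b (Finset.mem_filter.mp hb).2]

end TreeDecomp

section B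
open Classical
variable {G : Type} [Group G] [Fintype G]

lemma innerCF_sum {ι : Type*} (s : Finset ι) (χ : G → ℂ) (F : ι → G → ℂ) :
    innerCF χ (fun g => ∑ b ∈ s, F b g) = ∑ b ∈ s, innerCF χ (F b) := by
  unfold innerCF
  rw [Finset.mul_sum]
  congr 1
  simp_rw [Finset.mul_sum]
  rw [Finset.sum_comm]

lemma star_self_of_pm (x : ℂˣ) (h : x = 1 ∨ x = -1) :
    (starRingEnd ℂ) (x : ℂ) = x := by
  rcases h with h | h <;> subst h <;> simp

lemma innerCF_indAug (χ : G →* ℂˣ) (hsq : ∀ g, χ g = 1 ∨ χ g = -1) (H : Subgroup G) :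
    innerCF (fun g => (χ g : ℂ)) (indAug H) = if H ≤ χ.ker then 0 else 1 := by
  have hcast : ∀ g, (starRingEnd ℂ) ((χ g : ℂ)) = χ g := fun g => star_self_of_pm _ (hsq g)
  have hS : ∀ x : G, (∑ g : G, (starRingEnd ℂ) ((χ g : ℂ)) * augChar H (x⁻¹ * g * x)) =
      ∑ h : G, (χ h : ℂ) * augChar H h := by
    intro x
    refine (Fintype.sum_equiv (MulAut.conj x).toEquiv _ _ ?_).symm
    intro h
    have h1 : (MulAut.conj x).toEquiv h = x * h * x⁻¹ := rfl
    have h2 : x⁻¹ * (x * h * x⁻¹) * x = h := by group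
    rw [h1, h2, hcast]
    congr 1
    have : χ (x * h * x⁻¹) = χ x * χ h * (χ x)⁻¹ := by
      rw [map_mul, map_mul, map_inv]
    rw [this]
    push_cast
    rw [mul_comm ((χ x : ℂ))]
    rw [mul_assoc, mul_inv_cancel₀ (Units.ne_zero _), mul_one]
  -- main computation
  have hT : (∑ h : G, (χ h : ℂ) * augChar H h)
      = (Nat.card H : ℂ) - ∑ h ∈ univ.filter (· ∈ H), (χ h : ℂ) := by
    have hzero : ∀ h ∈ (univ : Finset G), (χ h : ℂ) * augChar H h ≠ 0 → h ∈ H := by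
      intro h _ hne
      by_contra hmem
      apply hne
      unfold augChar
      rw [if_neg hmem, mul_zero]
    rw [← Finset.sum_filter_of_ne hzero]
    have h1mem : (1 : G) ∈ univ.filter (· ∈ H) := by
      simp [Subgroup.one_mem]
    rw [← Finset.add_sum_erase _ _ h1mem, ← Finset.add_sum_erase _ _ h1mem]
    have e1 : (χ 1 : ℂ) * augChar H 1 = (Nat.card H : ℂ) - 1 := by
      unfold augChar
      rw [if_pos (Subgroup.one_mem H), if_pos rfl, map_one]
      simp
    rw [e1]
    have e2 : ∀ h ∈ (univ.filter (· ∈ H)).erase 1, (χ h : ℂ) * augChar H h = -(χ h : ℂ) := by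
      intro h hh
      obtain ⟨hne, hmem⟩ := Finset.mem_erase.mp hh
      unfold augChar
      rw [if_pos (Finset.mem_filter.mp hmem).2, if_neg hne]
      ring
    rw [Finset.sum_congr rfl e2, Finset.sum_neg_distrib, map_one]
    push_cast
    ring
  have hTval : (∑ h ∈ univ.filter (· ∈ H), (χ h : ℂ))
      = if H ≤ χ.ker then (Nat.card H : ℂ) else 0 := by
    split_ifs with hker
    · have hone : ∀ h ∈ univ.filter (· ∈ H), (χ h : ℂ) = 1 := by
        intro h hh
        have := hker (Finset.mem_filter.mp hh).2
        rw [MonoidHom.mem_ker] at this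
        rw [this, Units.val_one]
      rw [Finset.sum_congr rfl hone, Finset.sum_const, Nat.card_eq_fintype_card,
        Fintype.card_subtype]
      simp
    · obtain ⟨h₀, hh₀, hker₀⟩ := SetLike.not_le_iff_exists.mp hker
      rw [MonoidHom.mem_ker] at hker₀
      set Tsum := ∑ h ∈ univ.filter (· ∈ H), (χ h : ℂ) with hTdef
      have hre : Tsum = (χ h₀ : ℂ) * Tsum := by
        rw [hTdef, Finset.mul_sum]
        apply Finset.sum_nbij' (fun h => h₀⁻¹ * h) (fun h => h₀ * h)
        · intro a ha
          simp only [Finset.mem_filter, Finset.mem_univ, true_and] at ha ⊢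
          exact H.mul_mem (H.inv_mem hh₀) ha
        · intro a ha
          simp only [Finset.mem_filter, Finset.mem_univ, true_and] at ha ⊢
          exact H.mul_mem hh₀ ha
        · intro a _; group
        · intro a _; group
        · intro a _
          rw [map_mul, map_inv, Units.val_mul, Units.val_inv_eq_inv_val,
            mul_inv_cancel_left₀ (Units.ne_zero _)]
      have : (1 - (χ h₀ : ℂ)) * Tsum = 0 := by
        rw [sub_mul, one_mul, ← hre, sub_self]
      rcases mul_eq_zero.mp this with h | h
      · exfalso
        apply hker₀
        apply Units.ext
        have : (χ h₀ : ℂ) = 1 := by linear_combination -h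
        simpa using this
      · exact h
  have key : (∑ g : G, (starRingEnd ℂ) ((χ g : ℂ)) * indAug H g)
      = (Fintype.card G : ℂ) * ((Nat.card H : ℂ)⁻¹ * ∑ h : G, (χ h : ℂ) * augChar H h) := by
    unfold indAug indCF
    have e1 : ∀ g : G, (starRingEnd ℂ) ((χ g : ℂ)) *
        ((Nat.card H : ℂ)⁻¹ * ∑ x : G, augChar H (x⁻¹ * g * x)) =
        (Nat.card H : ℂ)⁻¹ * ∑ x : G, (starRingEnd ℂ) ((χ g : ℂ)) * augChar H (x⁻¹ * g * x) := by
      intro g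
      rw [mul_left_comm, Finset.mul_sum]
    simp only [e1]
    rw [← Finset.mul_sum, Finset.sum_comm]
    simp only [hS]
    rw [Finset.sum_const, Finset.card_univ, nsmul_eq_mul]
    ring
  unfold innerCF
  rw [key, ← mul_assoc, inv_mul_cancel₀ (by
    exact_mod_cast Fintype.card_ne_zero), one_mul, hT, hTval]
  have hc : (Nat.card H : ℂ) ≠ 0 := by
    exact_mod_cast Nat.card_pos.ne'
  split_ifs
  · simp
  · rw [sub_zero, inv_mul_cancel₀ hc]
end B

section Q
open QuaternionGroup Subgroup
variable {m : ℕ} [NeZero m]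

instance : NeZero (2 * m) := ⟨Nat.mul_ne_zero two_ne_zero (NeZero.ne m)⟩

noncomputable def φm (m : ℕ) : ZMod (2*m) →+* ZMod 2 :=
  ZMod.castHom (dvd_mul_right 2 m) (ZMod 2)

lemma zmod2_cases (x : ZMod 2) : x = 0 ∨ x = 1 := by revert x; decide

lemma natCast_val_self (i : ZMod (2*m)) : ((i.val : ℕ) : ZMod (2*m)) = i :=
  ZMod.natCast_rightInverse i

lemma a_pow_nat (i : ZMod (2*m)) (k : ℕ) : (a i : QuaternionGroup m) ^ k = a ((k : ZMod (2*m)) * i) := by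
  induction k with
  | zero => rw [pow_zero, Nat.cast_zero, zero_mul, one_def]
  | succ k ih =>
      rw [pow_succ, ih, a_mul_a]
      congr 1
      push_cast
      ring

lemma a_inv (i : ZMod (2*m)) : (a i : QuaternionGroup m)⁻¹ = a (-i) := by
  apply inv_eq_of_mul_eq_one_right
  rw [a_mul_a, add_neg_cancel, one_def]

lemma a_zpow (i : ZMod (2*m)) (k : ℤ) :
    (a i : QuaternionGroup m) ^ k = a ((k : ZMod (2*m)) * i) := by
  cases k with
  | ofNat k =>
      simp only [Int.ofNat_eq_natCast, zpow_natCast, a_pow_nat]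
      norm_cast
  | negSucc k =>
      simp only [zpow_negSucc, a_pow_nat, a_inv]
      congr 1
      push_cast
      ring

lemma mem_zpowers_a_iff {x : QuaternionGroup m} {i : ZMod (2*m)} :
    x ∈ zpowers (a i : QuaternionGroup m) ↔ ∃ k : ℤ, x = a ((k : ZMod (2*m)) * i) := by
  rw [Subgroup.mem_zpowers_iff]
  exact exists_congr fun k => by rw [a_zpow, eq_comm]

lemma xa_not_mem_zpowers_a (j i : ZMod (2*m)) :
    xa j ∉ zpowers (a i : QuaternionGroup m) := by
  rw [mem_zpowers_a_iff]
  rintro ⟨k, hk⟩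
  cases hk

lemma phi_val (i : ZMod (2*m)) : φm m i = ((i.val : ℕ) : ZMod 2) := by
  conv_lhs => rw [← natCast_val_self i]
  simp [φm]

lemma neg_one_pow_val_eq_one_iff (i : ZMod (2*m)) :
    ((-1 : ℂˣ) ^ i.val = 1) ↔ φm m i = 0 := by
  rw [phi_val, neg_one_pow_eq_one_iff_even, ZMod.natCast_eq_zero_iff, even_iff_two_dvd]
  intro h
  have := congrArg (Units.val) h
  norm_num at this

lemma xa_inv (j : ZMod (2*m)) : (xa j : QuaternionGroup m)⁻¹ = xa (j + (m : ZMod (2*m))) := by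
  apply inv_eq_of_mul_eq_one_right
  rw [xa_mul_xa]
  have h2m : ((2*m : ℕ) : ZMod (2*m)) = 0 := ZMod.natCast_self _
  have : ((m : ZMod (2*m)) + (j + (m : ZMod (2*m))) - j) = 0 := by
    push_cast at h2m ⊢
    linear_combination h2m
  rw [this, one_def]

lemma mem_zpowers_xa {x : QuaternionGroup m} {j : ZMod (2*m)}
    (hx : x ∈ zpowers (xa j : QuaternionGroup m)) :
    x = 1 ∨ x = xa j ∨ x = a (m : ZMod (2*m)) ∨ x = xa (j + (m : ZMod (2*m))) := by
  rw [mem_zpowers_iff_mem_range_orderOf, orderOf_xa] at hx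
  simp only [Finset.mem_image, Finset.mem_range] at hx
  obtain ⟨k, hk, rfl⟩ := hx
  interval_cases k
  · left; rfl
  · right; left; rw [pow_one]
  · right; right; left; rw [xa_sq]
  · right; right; right
    have : (xa j : QuaternionGroup m) ^ 3 = xa j ^ 2 * xa j := by rw [pow_succ]
    rw [this, xa_sq, a_mul_xa]
    congr 1
    have h2m : ((2*m : ℕ) : ZMod (2*m)) = 0 := ZMod.natCast_self _
    push_cast at h2m ⊢
    linear_combination -h2m

lemma conj_a_one (g : QuaternionGroup m) :
    g * a 1 * g⁻¹ = a 1 ∨ g * a 1 * g⁻¹ = a (-1) := by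
  have h2m : ((2*m : ℕ) : ZMod (2*m)) = 0 := ZMod.natCast_self _
  cases g with
  | a k =>
      left
      rw [a_mul_a, a_inv, a_mul_a]
      congr 1
      ring
  | xa k =>
      right
      rw [xa_mul_a, xa_inv, xa_mul_xa]
      congr 1
      push_cast at h2m ⊢
      linear_combination h2m

lemma conj_xa (g : QuaternionGroup m) (j : ZMod (2*m)) :
    ∃ t : ZMod (2*m), g * xa j * g⁻¹ = xa (j + 2*t) := by
  cases g with
  | a k =>
      refine ⟨-k, ?_⟩
      rw [a_mul_xa, a_inv, xa_mul_a]
      congr 1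
      ring
  | xa k =>
      refine ⟨k - j, ?_⟩
      rw [xa_mul_xa, xa_inv, a_mul_xa]
      congr 1
      ring

lemma conj_a_xa (k j : ZMod (2*m)) : a k * xa j * (a k)⁻¹ = xa (j - 2*k) := by
  rw [a_mul_xa, a_inv, xa_mul_a]
  congr 1
  ring

lemma phi_two_mul (t : ZMod (2*m)) : φm m (2*t) = 0 := by
  rw [map_mul]
  have : φm m 2 = 0 := by
    have h2 : (2 : ZMod (2*m)) = ((2:ℕ) : ZMod (2*m)) := by norm_cast
    rw [h2, map_natCast]
    decide
  rw [this, zero_mul]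

lemma phi_eq_zero_iff_exists (x : ZMod (2*m)) : φm m x = 0 ↔ ∃ t, x = 2 * t := by
  constructor
  · intro h
    rw [phi_val, ZMod.natCast_eq_zero_iff] at h
    obtain ⟨s, hs⟩ := h
    refine ⟨(s : ZMod (2*m)), ?_⟩
    rw [← natCast_val_self x, hs]
    push_cast
    ring
  · rintro ⟨t, rfl⟩
    exact phi_two_mul t

lemma isUnit_of_phi_ne {e : ℕ} (he : 2 * m = 2 ^ e) (x : ZMod (2*m)) (hx : φm m x ≠ 0) :
    IsUnit x := by
  rw [phi_val, Ne, ZMod.natCast_eq_zero_iff] at hx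
  have hodd : (x.val).Coprime 2 := by
    rw [Nat.coprime_comm]
    exact (Nat.Prime.coprime_iff_not_dvd Nat.prime_two).mpr hx
  have hco : (x.val).Coprime (2*m) := by
    have := hodd.pow_right e
    rwa [← he] at this
  have := (ZMod.isUnit_iff_coprime x.val (2*m)).mpr hco
  rwa [natCast_val_self] at this

lemma a_one_mem_zpowers_a {e : ℕ} (he : 2 * m = 2 ^ e) {i : ZMod (2*m)} (hi : φm m i ≠ 0) :
    (a 1 : QuaternionGroup m) ∈ zpowers (a i) := by
  obtain ⟨j, hj⟩ := IsUnit.exists_right_inv (isUnit_of_phi_ne he i hi)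
  have h1 : (a i : QuaternionGroup m) ^ ((j.val : ℕ) : ℤ) = a 1 := by
    rw [a_zpow]
    congr 1
    push_cast
    rw [natCast_val_self]
    linear_combination hj
  exact ⟨_, h1⟩

lemma zpowers_a_eq_of_phi_ne {e : ℕ} (he : 2 * m = 2 ^ e) {i : ZMod (2*m)} (hi : φm m i ≠ 0) :
    zpowers (a i : QuaternionGroup m) = zpowers (a 1) := by
  apply le_antisymm
  · rw [Subgroup.zpowers_le]
    have h1 : (a 1 : QuaternionGroup m) ^ ((i.val : ℕ) : ℤ) = a i := by
      rw [a_zpow]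
      congr 1
      push_cast
      rw [natCast_val_self, mul_one]
    exact ⟨_, h1⟩
  · rw [Subgroup.zpowers_le]
    exact a_one_mem_zpowers_a he hi

lemma P0_iff {e : ℕ} (he : 2 * m = 2 ^ e) (h : QuaternionGroup m) :
    (∃ g : QuaternionGroup m, zpowers h = zpowers (g * a 1 * g⁻¹)) ↔
      (∃ i, h = a i ∧ φm m i ≠ 0) := by
  constructor
  · rintro ⟨g, hg⟩
    have hmem : g * a 1 * g⁻¹ ∈ zpowers h := hg ▸ mem_zpowers _
    rcases conj_a_one g with hc | hc <;> rw [hc] at hg hmem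
    · cases h with
      | xa j => exact absurd (hg ▸ mem_zpowers (xa j)) (xa_not_mem_zpowers_a j 1)
      | a i =>
          refine ⟨i, rfl, ?_⟩
          obtain ⟨k, hk⟩ := mem_zpowers_a_iff.mp hmem
          have : (1 : ZMod (2*m)) = (k : ZMod (2*m)) * i := by injection hk
          intro h0
          have := congrArg (φm m) this
          rw [map_one, map_mul, h0, mul_zero] at this
          exact one_ne_zero this
    · cases h with
      | xa j => exact absurd (hg ▸ mem_zpowers (xa j)) (xa_not_mem_zpowers_a j (-1))
      | a i =>
          refine ⟨i, rfl, ?_⟩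
          obtain ⟨k, hk⟩ := mem_zpowers_a_iff.mp hmem
          have : (-1 : ZMod (2*m)) = (k : ZMod (2*m)) * i := by injection hk
          intro h0
          have := congrArg (φm m) this
          rw [map_neg, map_one, map_mul, h0, mul_zero] at this
          have : (1 : ZMod 2) = 0 := by
            rw [← neg_neg (1 : ZMod 2), this, neg_zero]
          exact one_ne_zero this
  · rintro ⟨i, rfl, hi⟩
    exact ⟨1, by rw [one_mul, inv_one, mul_one, zpowers_a_eq_of_phi_ne he hi]⟩

lemma Pxa_iff (hme : φm m ((m:ℕ) : ZMod (2*m)) = 0) (r : ZMod (2*m)) (h : QuaternionGroup m) :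
    (∃ g : QuaternionGroup m, zpowers h = zpowers (g * xa r * g⁻¹)) ↔
      (∃ j, h = xa j ∧ φm m j = φm m r) := by
  constructor
  · rintro ⟨g, hg⟩
    obtain ⟨t, ht⟩ := conj_xa g r
    rw [ht] at hg
    cases h with
    | a i =>
        have hxmem : xa (r + 2*t) ∈ zpowers (a i : QuaternionGroup m) := by
          rw [hg]; exact mem_zpowers _
        exact absurd hxmem (xa_not_mem_zpowers_a _ _)
    | xa j =>
        have hjmem : xa j ∈ zpowers (xa (r + 2*t) : QuaternionGroup m) := by
          rw [← hg]; exact mem_zpowers _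
        refine ⟨j, rfl, ?_⟩
        rcases mem_zpowers_xa hjmem with h1 | h2 | h3 | h4
        · rw [one_def] at h1; cases h1
        · have hj : j = r + 2*t := by injection h2
          rw [hj, map_add, phi_two_mul, add_zero]
        · cases h3
        · have hj : j = r + 2*t + (m : ZMod (2*m)) := by injection h4
          rw [hj, map_add, map_add, phi_two_mul, hme, add_zero, add_zero]
  · rintro ⟨j, rfl, hj⟩
    have h0 : φm m (r - j) = 0 := by rw [map_sub, hj, sub_self]
    obtain ⟨t, ht⟩ := (phi_eq_zero_iff_exists _).mp h0
    refine ⟨a t, ?_⟩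
    rw [conj_a_xa]
    rw [show r - 2*t = j by linear_combination ht]

lemma map_conj_zpowers {G : Type} [Group G] (g x : G) :
    Subgroup.map (MulAut.conj g).toMonoidHom (zpowers x) = zpowers (g * x * g⁻¹) := by
  rw [MonoidHom.map_zpowers]
  rfl

-- character value lemmas
variable (χ : QuaternionGroup m →* ℂˣ)

lemma chi_pm (hχ : orderOf χ = 2) (g : QuaternionGroup m) : χ g = 1 ∨ χ g = -1 := by
  have h2 : χ ^ 2 = 1 := by rw [← hχ]; exact pow_orderOf_eq_one χ
  have hg : (χ g) ^ 2 = 1 := by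
    have := congrArg (fun ψ : QuaternionGroup m →* ℂˣ => ψ g) h2
    simpa using this
  have hc : ((χ g : ℂ) - 1) * ((χ g : ℂ) + 1) = 0 := by
    have := congrArg (Units.val) hg
    push_cast at this
    linear_combination this
  rcases mul_eq_zero.mp hc with h | h
  · left; exact Units.ext (by rw [Units.val_one]; linear_combination h)
  · right; exact Units.ext (by rw [Units.val_neg, Units.val_one]; linear_combination h)

lemma chi_a_val (i : ZMod (2*m)) : χ (a i) = χ (a 1) ^ i.val := by
  conv_lhs => rw [← natCast_val_self i, ← a_one_pow]
  rw [map_pow]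

lemma chi_xa_val (i : ZMod (2*m)) : χ (xa i) = χ (xa 0) * χ (a 1) ^ i.val := by
  have : (xa i : QuaternionGroup m) = xa 0 * a i := by rw [xa_mul_a, zero_add]
  rw [this, map_mul, chi_a_val]

lemma chi_nontrivial (hχ : orderOf χ = 2) :
    ¬ (χ (a 1) = 1 ∧ χ (xa 0) = 1) := by
  rintro ⟨h1, h2⟩
  have : χ = 1 := by
    apply MonoidHom.ext
    intro g
    cases g with
    | a i => rw [chi_a_val, h1, one_pow]; rfl
    | xa i => rw [chi_xa_val, h1, h2, one_pow, one_mul]; rfl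
  rw [this, orderOf_one] at hχ
  norm_num at hχ

lemma neg_one_ne_one_units : (-1 : ℂˣ) ≠ 1 := by
  intro h
  have := congrArg Units.val h
  norm_num at this

open Classical in
lemma pattern (e : ℕ) (he : 2*m = 2^e) (hme : φm m ((m:ℕ) : ZMod (2*m)) = 0)
    (χ₀ χ₁ χ₂ : QuaternionGroup m →* ℂˣ)
    (v0a : ∀ i, χ₀ (a i) = 1) (v0x : ∀ i, χ₀ (xa i) = -1)
    (v1a : ∀ i, (χ₁ (a i) = 1 ↔ φm m i = 0)) (v1x : ∀ i, (χ₁ (xa i) = 1 ↔ φm m i = 0))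
    (v2a : ∀ i, (χ₂ (a i) = 1 ↔ φm m i = 0)) (v2x : ∀ i, (χ₂ (xa i) = 1 ↔ φm m i = 1))
    (h : QuaternionGroup m) :
    ((if χ₀ h = 1 then (0:ℂ) else 1) =
      (if ∃ g, zpowers h = zpowers (g * xa 0 * g⁻¹) then (1:ℂ) else 0) +
      (if ∃ g, zpowers h = zpowers (g * xa 1 * g⁻¹) then (1:ℂ) else 0)) ∧
    ((if χ₁ h = 1 then (0:ℂ) else 1) =
      (if ∃ g, zpowers h = zpowers (g * a 1 * g⁻¹) then (1:ℂ) else 0) +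
      (if ∃ g, zpowers h = zpowers (g * xa 1 * g⁻¹) then (1:ℂ) else 0)) ∧
    ((if χ₂ h = 1 then (0:ℂ) else 1) =
      (if ∃ g, zpowers h = zpowers (g * a 1 * g⁻¹) then (1:ℂ) else 0) +
      (if ∃ g, zpowers h = zpowers (g * xa 0 * g⁻¹) then (1:ℂ) else 0)) := by
  have φ0 : φm m (0 : ZMod (2*m)) = 0 := map_zero _
  have φ1 : φm m (1 : ZMod (2*m)) = 1 := map_one _
  cases h with
  | a i =>
      have hP1 : ¬ ∃ g : QuaternionGroup m, zpowers (a i) = zpowers (g * xa 0 * g⁻¹) := by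
        rw [Pxa_iff hme]
        rintro ⟨j, hj, -⟩
        cases hj
      have hP2 : ¬ ∃ g : QuaternionGroup m, zpowers (a i) = zpowers (g * xa 1 * g⁻¹) := by
        rw [Pxa_iff hme]
        rintro ⟨j, hj, -⟩
        cases hj
      have hP0 : (∃ g : QuaternionGroup m, zpowers (a i) = zpowers (g * a 1 * g⁻¹)) ↔
          φm m i ≠ 0 := by
        rw [P0_iff he]
        constructor
        · rintro ⟨i', hi', hne⟩
          have : i = i' := by injection hi'
          rwa [this]
        · intro hi
          exact ⟨i, rfl, hi⟩
      rw [if_pos (v0a i), if_neg hP1, if_neg hP2]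
      refine ⟨by norm_num, ?_, ?_⟩ <;>
      · rcases zmod2_cases (φm m i) with h0 | h0
        · rw [if_pos (by first | exact (v1a i).mpr h0 | exact (v2a i).mpr h0),
            if_neg (by rw [hP0]; simp [h0])]
          norm_num
        · have hne : φm m i ≠ 0 := by rw [h0]; exact one_ne_zero
          rw [if_neg (by intro hc; first | exact hne ((v1a i).mp hc) | exact hne ((v2a i).mp hc)),
            if_pos (hP0.mpr hne)]
          norm_num
  | xa j =>
      have hP0 : ¬ ∃ g : QuaternionGroup m, zpowers (xa j) = zpowers (g * a 1 * g⁻¹) := by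
        rw [P0_iff he]
        rintro ⟨i, hi, -⟩
        cases hi
      have hP1 : (∃ g : QuaternionGroup m, zpowers (xa j) = zpowers (g * xa 0 * g⁻¹)) ↔
          φm m j = 0 := by
        rw [Pxa_iff hme]
        constructor
        · rintro ⟨j', hj', hp⟩
          have : j = j' := by injection hj'
          rw [this, hp, φ0]
        · intro hj
          exact ⟨j, rfl, by rw [hj, φ0]⟩
      have hP2 : (∃ g : QuaternionGroup m, zpowers (xa j) = zpowers (g * xa 1 * g⁻¹)) ↔
          φm m j = 1 := by
        rw [Pxa_iff hme]
        constructor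
        · rintro ⟨j', hj', hp⟩
          have : j = j' := by injection hj'
          rw [this, hp, φ1]
        · intro hj
          exact ⟨j, rfl, by rw [hj, φ1]⟩
      rw [if_neg (show ¬ χ₀ (xa j) = 1 by rw [v0x j]; exact neg_one_ne_one_units),
        if_neg hP0]
      rcases zmod2_cases (φm m j) with h0 | h0
      · have hne1 : φm m j ≠ 1 := by rw [h0]; exact zero_ne_one
        rw [if_pos (hP1.mpr h0), if_neg (fun hc => hne1 (hP2.mp hc)),
          if_pos ((v1x j).mpr h0), if_neg (fun hc => hne1 ((v2x j).mp hc))]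
        norm_num
      · have hne0 : φm m j ≠ 0 := by rw [h0]; exact one_ne_zero
        rw [if_neg (fun hc => hne0 (hP1.mp hc)), if_pos (hP2.mpr h0),
          if_neg (fun hc => hne0 ((v1x j).mp hc)), if_pos ((v2x j).mpr h0)]
        norm_num

lemma subgroup_cyclic_gen {G : Type} [Group G] (H : Subgroup G) (hc : IsCyclic H) :
    ∃ h : G, H = zpowers h := by
  obtain ⟨g, hg⟩ := hc.exists_generator
  refine ⟨(g : G), le_antisymm ?_ ?_⟩
  · intro x hx
    obtain ⟨k, hk⟩ := hg ⟨x, hx⟩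
    refine ⟨k, ?_⟩
    have := congrArg (Subtype.val) hk
    simpa using this
  · rw [Subgroup.zpowers_le]
    exact g.2

lemma neg_one_pow_eq_neg_one_iff (v : ℕ) :
    ((-1:ℂˣ)^v = -1) ↔ ¬((-1:ℂˣ)^v = 1) := by
  rcases Nat.even_or_odd v with hv | hv
  · rw [hv.neg_one_pow]
    constructor
    · intro h1 _
      exact neg_one_ne_one_units h1.symm
    · intro h
      exact absurd rfl h
  · rw [hv.neg_one_pow]
    constructor
    · intro _ hc
      exact neg_one_ne_one_units hc
    · intro _
      rfl

lemma chi0_vals (χ₀ : QuaternionGroup m →* ℂˣ) (hχ : orderOf χ₀ = 2)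
    (hk : zpowers (a 1 : QuaternionGroup m) ≤ χ₀.ker) :
    (∀ i, χ₀ (a i) = 1) ∧ (∀ i, χ₀ (xa i) = -1) := by
  have ha1 : χ₀ (a 1) = 1 := hk (mem_zpowers _)
  have v0a : ∀ i, χ₀ (a i) = 1 := fun i => by rw [chi_a_val, ha1, one_pow]
  have hxa0 : χ₀ (xa 0) = -1 := by
    rcases chi_pm χ₀ hχ (xa 0) with h | h
    · exact absurd ⟨ha1, h⟩ (chi_nontrivial χ₀ hχ)
    · exact h
  exact ⟨v0a, fun i => by rw [chi_xa_val, ha1, one_pow, mul_one, hxa0]⟩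

lemma chi1_vals (χ₁ : QuaternionGroup m →* ℂˣ) (hχ : orderOf χ₁ = 2)
    (hk : zpowers (xa 0 : QuaternionGroup m) ≤ χ₁.ker) :
    (∀ i, (χ₁ (a i) = 1 ↔ φm m i = 0)) ∧ (∀ i, (χ₁ (xa i) = 1 ↔ φm m i = 0)) := by
  have hxa0 : χ₁ (xa 0) = 1 := hk (mem_zpowers _)
  have ha1 : χ₁ (a 1) = -1 := by
    rcases chi_pm χ₁ hχ (a 1) with h | h
    · exact absurd ⟨h, hxa0⟩ (chi_nontrivial χ₁ hχ)
    · exact h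
  constructor
  · intro i
    rw [chi_a_val, ha1, neg_one_pow_val_eq_one_iff]
  · intro i
    rw [chi_xa_val, hxa0, one_mul, ha1, neg_one_pow_val_eq_one_iff]

lemma phi_one_iff (x : ZMod (2*m)) : φm m x = 1 ↔ ¬ (φm m x = 0) := by
  rcases zmod2_cases (φm m x) with h | h <;> rw [h] <;> simp

lemma chi2_vals (χ₂ : QuaternionGroup m →* ℂˣ) (hχ : orderOf χ₂ = 2)
    (hk : zpowers (xa 0 * a 1 : QuaternionGroup m) ≤ χ₂.ker) :
    (∀ i, (χ₂ (a i) = 1 ↔ φm m i = 0)) ∧ (∀ i, (χ₂ (xa i) = 1 ↔ φm m i = 1)) := by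
  have hxa1e : (xa 0 * a 1 : QuaternionGroup m) = xa 1 := by rw [xa_mul_a, zero_add]
  have hxa1 : χ₂ (xa 1) = 1 := by rw [← hxa1e]; exact hk (mem_zpowers _)
  haveI : Fact (1 < 2*m) := ⟨by have := Nat.pos_of_ne_zero (NeZero.ne m); omega⟩
  have hval1 : (1 : ZMod (2*m)).val = 1 := ZMod.val_one (2*m)
  have hrel : χ₂ (xa 0) * χ₂ (a 1) = 1 := by
    have := chi_xa_val χ₂ (1 : ZMod (2*m))
    rw [hval1, pow_one] at this
    rw [← this, hxa1]
  have ha1 : χ₂ (a 1) = -1 := by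
    rcases chi_pm χ₂ hχ (a 1) with h | h
    · have hx0 : χ₂ (xa 0) = 1 := by rwa [h, mul_one] at hrel
      exact absurd ⟨h, hx0⟩ (chi_nontrivial χ₂ hχ)
    · exact h
  have hxa0 : χ₂ (xa 0) = -1 := by
    have hinv : χ₂ (xa 0) * (-1 : ℂˣ) = 1 := by rw [← ha1]; exact hrel
    have hi : χ₂ (xa 0) = (-1 : ℂˣ)⁻¹ := eq_inv_of_mul_eq_one_left hinv
    apply Units.ext
    rw [hi]
    simp
  constructor
  · intro i
    rw [chi_a_val, ha1, neg_one_pow_val_eq_one_iff]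
  · intro i
    rw [chi_xa_val, ha1, hxa0, phi_one_iff, ← neg_one_pow_val_eq_one_iff,
      ← neg_one_pow_eq_neg_one_iff]
    constructor
    · intro h
      have := congrArg (fun z => (-1 : ℂˣ) * z) h
      simpa using this
    · intro h
      rw [h]
      simp

end Q

open Subgroup

open Classical in
/-- Let `G = Q_{2^{n+1}}` (`n ≥ 2`) and let `T` be a Hurwitz tree of type `(G,2)` with
`δ_T = 0`, `⟨a_T, χ₀⟩ = 2` and `⟨a_T, χ₁⟩ = ⟨a_T, χ₂⟩ ≥ 2`, where `χᵢ` is the order-`2`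
character of `G` whose kernel contains `Hᵢ` (`H₀ = ⟨τ⟩`, `H₁ = ⟨σ⟩`, `H₂ = ⟨στ⟩`).
Then, with `Bᵢ = {leaves b : [G_b] = [Hᵢ]}`, one has `|B₁| = |B₂| = 1` and `|B₀| ≥ 1`. -/
theorem stmt17 (n : ℕ) (hn : 2 ≤ n)
    (χ₀ χ₁ χ₂ : QuaternionGroup (2 ^ (n - 1)) →* ℂˣ)
    (hχ₀ : orderOf χ₀ = 2) (hχ₁ : orderOf χ₁ = 2) (hχ₂ : orderOf χ₂ = 2)
    (hk₀ : zpowers (QuaternionGroup.a 1) ≤ χ₀.ker)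
    (hk₁ : zpowers (QuaternionGroup.xa 0) ≤ χ₁.ker)
    (hk₂ : zpowers (QuaternionGroup.xa 0 * QuaternionGroup.a 1) ≤ χ₂.ker)
    (T : HurwitzTree (QuaternionGroup (2 ^ (n - 1))) 2)
    (hδ : T.depth = 0)
    (ha₀ : innerCF (fun g => (χ₀ g : ℂ)) T.artin = 2)
    (k : ℕ) (hk : 2 ≤ k)
    (ha₁ : innerCF (fun g => (χ₁ g : ℂ)) T.artin = k)
    (ha₂ : innerCF (fun g => (χ₂ g : ℂ)) T.artin = k) :
    (T.toMetricRootedTree.leaves.filter (fun b => ∃ g, T.Gv b =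
        Subgroup.map (MulAut.conj g).toMonoidHom (zpowers (QuaternionGroup.xa 0)))).card = 1 ∧
    (T.toMetricRootedTree.leaves.filter (fun b => ∃ g, T.Gv b =
        Subgroup.map (MulAut.conj g).toMonoidHom
          (zpowers (QuaternionGroup.xa 0 * QuaternionGroup.a 1)))).card = 1 ∧
    1 ≤ (T.toMetricRootedTree.leaves.filter (fun b => ∃ g, T.Gv b =
        Subgroup.map (MulAut.conj g).toMonoidHom (zpowers (QuaternionGroup.a 1)))).card := by
  classical
  haveI : NeZero (2 ^ (n - 1)) := ⟨pow_ne_zero _ two_ne_zero⟩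
  have he : 2 * 2 ^ (n - 1) = 2 ^ (n - 1 + 1) := by rw [pow_succ]; ring
  have hme : φm (2 ^ (n - 1)) ((2 ^ (n - 1) : ℕ) : ZMod (2 * 2 ^ (n - 1))) = 0 := by
    rw [map_natCast, ZMod.natCast_eq_zero_iff]
    exact dvd_pow_self 2 (by omega)
  obtain ⟨v0a, v0x⟩ := chi0_vals χ₀ hχ₀ hk₀
  obtain ⟨v1a, v1x⟩ := chi1_vals χ₁ hχ₁ hk₁
  obtain ⟨v2a, v2x⟩ := chi2_vals χ₂ hχ₂ hk₂
  have hsq0 := chi_pm χ₀ hχ₀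
  have hsq1 := chi_pm χ₁ hχ₁
  have hsq2 := chi_pm χ₂ hχ₂
  have hgen : ∀ b ∈ T.toMetricRootedTree.leaves, ∃ h, T.Gv b = zpowers h := by
    intro b hb
    have h2 := T.h2 b (Finset.mem_filter.mp hb).2
    exact subgroup_cyclic_gen _ h2.2
  have hxa1e : (QuaternionGroup.xa 0 * QuaternionGroup.a 1 : QuaternionGroup (2 ^ (n - 1))) =
      QuaternionGroup.xa 1 := by rw [QuaternionGroup.xa_mul_a, zero_add]
  have hsum0 : innerCF (fun g => (χ₀ g : ℂ)) T.artin =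
      ∑ b ∈ T.toMetricRootedTree.leaves,
        ((if ∃ g, T.Gv b = Subgroup.map (MulAut.conj g).toMonoidHom
            (zpowers (QuaternionGroup.xa 0)) then (1:ℂ) else 0) +
         (if ∃ g, T.Gv b = Subgroup.map (MulAut.conj g).toMonoidHom
            (zpowers (QuaternionGroup.xa 0 * QuaternionGroup.a 1)) then (1:ℂ) else 0)) := by
    rw [T.artin_eq_sum, innerCF_sum]
    apply Finset.sum_congr rfl
    intro b hb
    obtain ⟨h, hh⟩ := hgen b hb
    rw [innerCF_indAug χ₀ hsq0]
    have hker : (T.Gv b ≤ χ₀.ker) ↔ (χ₀ h = 1) := by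
      rw [hh, Subgroup.zpowers_le, MonoidHom.mem_ker]
    have e1 : (∃ g, T.Gv b = Subgroup.map (MulAut.conj g).toMonoidHom
        (zpowers (QuaternionGroup.xa 0)))
        ↔ (∃ g, zpowers h = zpowers (g * QuaternionGroup.xa 0 * g⁻¹)) := by
      simp_rw [hh, map_conj_zpowers]
    have e2 : (∃ g, T.Gv b = Subgroup.map (MulAut.conj g).toMonoidHom
        (zpowers (QuaternionGroup.xa 0 * QuaternionGroup.a 1)))
        ↔ (∃ g, zpowers h = zpowers (g * QuaternionGroup.xa 1 * g⁻¹)) := by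
      simp_rw [hh, hxa1e, map_conj_zpowers]
    rw [if_congr hker rfl rfl, if_congr e1 rfl rfl, if_congr e2 rfl rfl]
    exact (pattern _ he hme χ₀ χ₁ χ₂ v0a v0x v1a v1x v2a v2x h).1
  have hsum1 : innerCF (fun g => (χ₁ g : ℂ)) T.artin =
      ∑ b ∈ T.toMetricRootedTree.leaves,
        ((if ∃ g, T.Gv b = Subgroup.map (MulAut.conj g).toMonoidHom
            (zpowers (QuaternionGroup.a 1)) then (1:ℂ) else 0) +
         (if ∃ g, T.Gv b = Subgroup.map (MulAut.conj g).toMonoidHom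
            (zpowers (QuaternionGroup.xa 0 * QuaternionGroup.a 1)) then (1:ℂ) else 0)) := by
    rw [T.artin_eq_sum, innerCF_sum]
    apply Finset.sum_congr rfl
    intro b hb
    obtain ⟨h, hh⟩ := hgen b hb
    rw [innerCF_indAug χ₁ hsq1]
    have hker : (T.Gv b ≤ χ₁.ker) ↔ (χ₁ h = 1) := by
      rw [hh, Subgroup.zpowers_le, MonoidHom.mem_ker]
    have e1 : (∃ g, T.Gv b = Subgroup.map (MulAut.conj g).toMonoidHom
        (zpowers (QuaternionGroup.a 1)))
        ↔ (∃ g, zpowers h = zpowers (g * QuaternionGroup.a 1 * g⁻¹)) := by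
      simp_rw [hh, map_conj_zpowers]
    have e2 : (∃ g, T.Gv b = Subgroup.map (MulAut.conj g).toMonoidHom
        (zpowers (QuaternionGroup.xa 0 * QuaternionGroup.a 1)))
        ↔ (∃ g, zpowers h = zpowers (g * QuaternionGroup.xa 1 * g⁻¹)) := by
      simp_rw [hh, hxa1e, map_conj_zpowers]
    rw [if_congr hker rfl rfl, if_congr e1 rfl rfl, if_congr e2 rfl rfl]
    exact (pattern _ he hme χ₀ χ₁ χ₂ v0a v0x v1a v1x v2a v2x h).2.1
  have hsum2 : innerCF (fun g => (χ₂ g : ℂ)) T.artin =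
      ∑ b ∈ T.toMetricRootedTree.leaves,
        ((if ∃ g, T.Gv b = Subgroup.map (MulAut.conj g).toMonoidHom
            (zpowers (QuaternionGroup.a 1)) then (1:ℂ) else 0) +
         (if ∃ g, T.Gv b = Subgroup.map (MulAut.conj g).toMonoidHom
            (zpowers (QuaternionGroup.xa 0)) then (1:ℂ) else 0)) := by
    rw [T.artin_eq_sum, innerCF_sum]
    apply Finset.sum_congr rfl
    intro b hb
    obtain ⟨h, hh⟩ := hgen b hb
    rw [innerCF_indAug χ₂ hsq2]
    have hker : (T.Gv b ≤ χ₂.ker) ↔ (χ₂ h = 1) := by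
      rw [hh, Subgroup.zpowers_le, MonoidHom.mem_ker]
    have e1 : (∃ g, T.Gv b = Subgroup.map (MulAut.conj g).toMonoidHom
        (zpowers (QuaternionGroup.a 1)))
        ↔ (∃ g, zpowers h = zpowers (g * QuaternionGroup.a 1 * g⁻¹)) := by
      simp_rw [hh, map_conj_zpowers]
    have e2 : (∃ g, T.Gv b = Subgroup.map (MulAut.conj g).toMonoidHom
        (zpowers (QuaternionGroup.xa 0)))
        ↔ (∃ g, zpowers h = zpowers (g * QuaternionGroup.xa 0 * g⁻¹)) := by
      simp_rw [hh, map_conj_zpowers]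
    rw [if_congr hker rfl rfl, if_congr e1 rfl rfl, if_congr e2 rfl rfl]
    exact (pattern _ he hme χ₀ χ₁ χ₂ v0a v0x v1a v1x v2a v2x h).2.2
  rw [hsum0, Finset.sum_add_distrib, Finset.sum_boole, Finset.sum_boole] at ha₀
  rw [hsum1, Finset.sum_add_distrib, Finset.sum_boole, Finset.sum_boole] at ha₁
  rw [hsum2, Finset.sum_add_distrib, Finset.sum_boole, Finset.sum_boole] at ha₂
  have n0 : ((T.toMetricRootedTree.leaves.filter (fun b => ∃ g, T.Gv b =
      Subgroup.map (MulAut.conj g).toMonoidHom (zpowers (QuaternionGroup.xa 0)))).card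
      + (T.toMetricRootedTree.leaves.filter (fun b => ∃ g, T.Gv b =
      Subgroup.map (MulAut.conj g).toMonoidHom
        (zpowers (QuaternionGroup.xa 0 * QuaternionGroup.a 1)))).card : ℕ) = 2 := by
    exact_mod_cast ha₀
  have n1 : ((T.toMetricRootedTree.leaves.filter (fun b => ∃ g, T.Gv b =
      Subgroup.map (MulAut.conj g).toMonoidHom (zpowers (QuaternionGroup.a 1)))).card
      + (T.toMetricRootedTree.leaves.filter (fun b => ∃ g, T.Gv b =
      Subgroup.map (MulAut.conj g).toMonoidHom
        (zpowers (QuaternionGroup.xa 0 * QuaternionGroup.a 1)))).card : ℕ) = k := by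
    exact_mod_cast ha₁
  have n2 : ((T.toMetricRootedTree.leaves.filter (fun b => ∃ g, T.Gv b =
      Subgroup.map (MulAut.conj g).toMonoidHom (zpowers (QuaternionGroup.a 1)))).card
      + (T.toMetricRootedTree.leaves.filter (fun b => ∃ g, T.Gv b =
      Subgroup.map (MulAut.conj g).toMonoidHom (zpowers (QuaternionGroup.xa 0)))).card : ℕ)
      = k := by
    exact_mod_cast ha₂
  refine ⟨by omega, by omega, by omega⟩
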